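/- Let G be a compact Hausdorff topological group with Haar probability measure, let (ρ_σ, V_σ), (ρ_μ, V_μ), (ρ_ν, V_ν) be continuous irreducible finite-dimensional unitary representations of G with characters χ_σ, χ_μ, χ_ν and dimensions d_σ, d_μ, d_ν, and let u be an element of the center of G. Then for every integer g ≥ 1: ∫_{G^{2g+1}} χ_σ(x̄) · χ_μ(x̄) · χ_ν(x̄⁻¹ · (∏_{i=1}^{g} x_i y_i x_i⁻¹ y_i⁻¹) · u⁻¹) dx̄ dx_1 dy_1 ⋯ dx_g dy_g = D · χ_ν(u⁻¹)/d_ν^{2g+1}, where D = ∫_G χ_σ(x)·χ_μ(x)·χ_ν(x⁻¹) dx (the Clebsch–Gordan coefficient D_{σμν}). -/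

import Mathlib

open MeasureTheory

set_option linter.unusedSectionVars false
noncomputable section
namespace WilsonAux

variable {G : Type*} [Group G] [TopologicalSpace G] [IsTopologicalGroup G]
    [CompactSpace G] [T2Space G] [MeasurableSpace G] [BorelSpace G]
    {V : Type*} [NormedAddCommGroup V] [InnerProductSpace ℂ V] [FiniteDimensional ℂ V]

local notation "⟪" x ", " y "⟫" => @inner ℂ _ _ x y

/-- continuous trace functional -/
def traceCLM (V : Type*) [NormedAddCommGroup V] [InnerProductSpace ℂ V]
    [FiniteDimensional ℂ V] : (V →L[ℂ] V) →L[ℂ] ℂ :=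
  LinearMap.toContinuousLinearMap ((LinearMap.trace ℂ V).comp (ContinuousLinearMap.coeLM ℂ))

@[simp] lemma traceCLM_apply (A : V →L[ℂ] V) :
    traceCLM V A = LinearMap.trace ℂ V (A : V →ₗ[ℂ] V) := rfl

lemma trace_eq_sum_inner (b : OrthonormalBasis (Fin (Module.finrank ℂ V)) ℂ V)
    (f : V →L[ℂ] V) :
    LinearMap.trace ℂ V (f : V →ₗ[ℂ] V) = ∑ i, ⟪b i, f (b i)⟫ := by
  rw [LinearMap.trace_eq_matrix_trace ℂ b.toBasis, Matrix.trace]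
  congr 1
  ext i
  rw [Matrix.diag_apply, LinearMap.toMatrix_apply, OrthonormalBasis.coe_toBasis_repr_apply,
    OrthonormalBasis.repr_apply_apply, OrthonormalBasis.coe_toBasis]
  rfl

lemma trace_one' : LinearMap.trace ℂ V ((1 : V →L[ℂ] V) : V →ₗ[ℂ] V)
    = (Module.finrank ℂ V : ℂ) := by
  have : ((1 : V →L[ℂ] V) : V →ₗ[ℂ] V) = LinearMap.id := rfl
  rw [this, LinearMap.trace_id]

lemma trace_clm_mul_comm (A B : V →L[ℂ] V) :
    LinearMap.trace ℂ V ((A * B : V →L[ℂ] V) : V →ₗ[ℂ] V)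
      = LinearMap.trace ℂ V ((B * A : V →L[ℂ] V) : V →ₗ[ℂ] V) := by
  have h : ∀ X Y : V →L[ℂ] V, ((X * Y : V →L[ℂ] V) : V →ₗ[ℂ] V)
      = (X : V →ₗ[ℂ] V) * (Y : V →ₗ[ℂ] V) := fun X Y => rfl
  rw [h, h, LinearMap.trace_mul_comm]

/-- Schur's lemma: an operator commuting with an irreducible representation is scalar. -/
lemma schur_scalar [Nontrivial V] (ρ : G →* unitary (V →L[ℂ] V))
    (hirr : ∀ W : Submodule ℂ V,
      (∀ g : G, W.map ((ρ g : V →L[ℂ] V) : V →ₗ[ℂ] V) ≤ W) → W = ⊥ ∨ W = ⊤)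
    (A : V →L[ℂ] V) (hA : ∀ s : G, (ρ s : V →L[ℂ] V) * A = A * (ρ s : V →L[ℂ] V)) :
    A = (LinearMap.trace ℂ V (A : V →ₗ[ℂ] V) / (Module.finrank ℂ V : ℂ)) • 1 := by
  obtain ⟨c, hc⟩ := Module.End.exists_eigenvalue (A : V →ₗ[ℂ] V)
  set W := Module.End.eigenspace (A : V →ₗ[ℂ] V) c with hW
  have hWne : W ≠ ⊥ := hc
  have hinv : ∀ g : G, W.map ((ρ g : V →L[ℂ] V) : V →ₗ[ℂ] V) ≤ W := by
    intro g v hv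
    rcases Submodule.mem_map.mp hv with ⟨w, hw, rfl⟩
    have hw' : A w = c • w := Module.End.mem_eigenspace_iff.mp hw
    refine Module.End.mem_eigenspace_iff.mpr ?_
    have := congrArg (fun T : V →L[ℂ] V => T w) (hA g)
    simp only [ContinuousLinearMap.mul_apply] at this
    show A ((ρ g : V →L[ℂ] V) w) = c • (ρ g : V →L[ℂ] V) w
    rw [← this, hw', _root_.map_smul]
  rcases hirr W hinv with h | h
  · exact absurd h hWne
  · have hAv : ∀ v : V, A v = c • v := by
      intro v
      have : v ∈ W := h ▸ Submodule.mem_top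
      exact Module.End.mem_eigenspace_iff.mp this
    have hA1 : A = c • 1 := by
      ext v; simp [hAv v]
    have htr : LinearMap.trace ℂ V (A : V →ₗ[ℂ] V) = c * (Module.finrank ℂ V : ℂ) := by
      rw [hA1]
      have : ((c • (1 : V →L[ℂ] V) : V →L[ℂ] V) : V →ₗ[ℂ] V) = c • ((1 : V →L[ℂ] V) : V →ₗ[ℂ] V) := rfl
      rw [this, _root_.map_smul, trace_one', smul_eq_mul]
    have hd : (Module.finrank ℂ V : ℂ) ≠ 0 := by
      exact Nat.cast_ne_zero.mpr Module.finrank_pos.ne'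
    rw [htr, hA1]
    congr 1
    field_simp
  

variable (μ : Measure G) [μ.IsHaarMeasure] [IsProbabilityMeasure μ]

lemma cont_integrable {E' : Type*} [NormedAddCommGroup E'] (f : G → E') (hf : Continuous f) :
    Integrable f μ :=
  hf.integrable_of_hasCompactSupport (HasCompactSupport.of_compactSpace f)

section rep
variable (ρ : G →* unitary (V →L[ℂ] V))
    (hcont : Continuous fun g : G => ((ρ g : V →L[ℂ] V) : V →L[ℂ] V))
    (hirr : ∀ W : Submodule ℂ V,
      (∀ g : G, W.map ((ρ g : V →L[ℂ] V) : V →ₗ[ℂ] V) ≤ W) → W = ⊥ ∨ W = ⊤)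

include hcont hirr in
lemma conj_integral [Nontrivial V] (B : V →L[ℂ] V) :
    ∫ s, ((ρ s : V →L[ℂ] V) * B * (ρ s⁻¹ : V →L[ℂ] V)) ∂μ
      = (LinearMap.trace ℂ V (B : V →ₗ[ℂ] V) / (Module.finrank ℂ V : ℂ)) • 1 := by
  set F : G → (V →L[ℂ] V) := fun s => (ρ s : V →L[ℂ] V) * B * (ρ s⁻¹ : V →L[ℂ] V) with hF
  have hcF : Continuous F := ((hcont.mul continuous_const).mul (hcont.comp continuous_inv))
  have hiF : Integrable F μ := cont_integrable μ F hcF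
  set T : V →L[ℂ] V := ∫ s, F s ∂μ with hT
  have hmul : ∀ t : G, ∀ s : G, (ρ t : V →L[ℂ] V) * F s = F (t * s) * (ρ t : V →L[ℂ] V) := by
    intro t s
    have h1 : (ρ t : V →L[ℂ] V) * (ρ s : V →L[ℂ] V) = (ρ (t*s) : V →L[ℂ] V) := by
      rw [map_mul]; rfl
    have h2 : (ρ ((t*s)⁻¹) : V →L[ℂ] V) * (ρ t : V →L[ℂ] V) = (ρ s⁻¹ : V →L[ℂ] V) := by
      rw [← MulMemClass.coe_mul, ← map_mul]
      congr 2
      group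
    simp only [hF, ← mul_assoc]
    rw [h1, mul_assoc ((ρ (t*s) : V →L[ℂ] V) * B), h2]
  have hcomm : ∀ t : G, (ρ t : V →L[ℂ] V) * T = T * (ρ t : V →L[ℂ] V) := by
    intro t
    have L1 : ∫ s, (ρ t : V →L[ℂ] V) * F s ∂μ = (ρ t : V →L[ℂ] V) * T := by
      have h := ContinuousLinearMap.integral_comp_comm
        (ContinuousLinearMap.mul ℂ (V →L[ℂ] V) (ρ t : V →L[ℂ] V)) hiF
      simp only [ContinuousLinearMap.mul_apply'] at h
      exact h
    have L2 : ∫ s, F (t * s) * (ρ t : V →L[ℂ] V) ∂μ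
        = (∫ s, F (t * s) ∂μ) * (ρ t : V →L[ℂ] V) := by
      have h := ContinuousLinearMap.integral_comp_comm
        ((ContinuousLinearMap.mul ℂ (V →L[ℂ] V)).flip (ρ t : V →L[ℂ] V))
        (cont_integrable μ _ (hcF.comp (continuous_mul_left t)))
      simp only [ContinuousLinearMap.flip_apply, ContinuousLinearMap.mul_apply'] at h
      exact h
    have L3 : ∫ s, F (t * s) ∂μ = T := integral_mul_left_eq_self F t
    rw [← L1]
    simp_rw [hmul t]
    rw [L2, L3]
  have htrF : ∀ s, LinearMap.trace ℂ V ((F s : V →L[ℂ] V) : V →ₗ[ℂ] V)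
      = LinearMap.trace ℂ V (B : V →ₗ[ℂ] V) := by
    intro s
    have h3 : (ρ s⁻¹ : V →L[ℂ] V) * (ρ s : V →L[ℂ] V) = 1 := by
      rw [← MulMemClass.coe_mul, ← map_mul, inv_mul_cancel, map_one, OneMemClass.coe_one]
    have : F s = ((ρ s : V →L[ℂ] V) * B) * (ρ s⁻¹ : V →L[ℂ] V) := by simp only [hF]
    rw [this, trace_clm_mul_comm, ← mul_assoc, h3, one_mul]
  have htrT : LinearMap.trace ℂ V (T : V →ₗ[ℂ] V) = LinearMap.trace ℂ V (B : V →ₗ[ℂ] V) := by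
    have h := ContinuousLinearMap.integral_comp_comm (traceCLM V) hiF
    calc LinearMap.trace ℂ V (T : V →ₗ[ℂ] V)
        = traceCLM V (∫ s, F s ∂μ) := rfl
      _ = ∫ s, traceCLM V (F s) ∂μ := h.symm
      _ = ∫ s, LinearMap.trace ℂ V (B : V →ₗ[ℂ] V) ∂μ := by
          congr 1; funext s; rw [traceCLM_apply, htrF s]
      _ = LinearMap.trace ℂ V (B : V →ₗ[ℂ] V) := by simp
  rw [← htrT]
  exact schur_scalar ρ hirr T hcomm


/-- The character. -/
def charOf (ρ : G →* unitary (V →L[ℂ] V)) (t : G) : ℂ :=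
  LinearMap.trace ℂ V ((ρ t : V →L[ℂ] V) : V →ₗ[ℂ] V)

lemma coe_rho_mul (a b : G) :
    ((ρ (a * b) : V →L[ℂ] V)) = (ρ a : V →L[ℂ] V) * (ρ b : V →L[ℂ] V) := by
  rw [map_mul]; rfl

lemma charOf_mul_comm (a b : G) : charOf ρ (a * b) = charOf ρ (b * a) := by
  unfold charOf
  rw [coe_rho_mul, coe_rho_mul, trace_clm_mul_comm]

include hcont in
lemma continuous_charOf : Continuous (charOf ρ) := by
  have : charOf ρ = fun t => traceCLM V ((ρ t : V →L[ℂ] V)) := rfl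
  rw [this]
  exact (traceCLM V).continuous.comp hcont

include hcont hirr in
lemma int_conj_char [Nontrivial V] (p q r : G) :
    ∫ s, charOf ρ (p * s * q * s⁻¹ * r) ∂μ
      = charOf ρ (r * p) * charOf ρ q / (Module.finrank ℂ V : ℂ) := by
  have hpt : ∀ s : G, charOf ρ (p * s * q * s⁻¹ * r)
      = traceCLM V ((ρ (r*p) : V →L[ℂ] V) *
          ((ρ s : V →L[ℂ] V) * (ρ q : V →L[ℂ] V) * (ρ s⁻¹ : V →L[ℂ] V))) := by
    intro s
    unfold charOf
    rw [traceCLM_apply]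
    have h1 : (ρ (p * s * q * s⁻¹ * r) : V →L[ℂ] V)
        = ((ρ p : V →L[ℂ] V) * ((ρ s : V →L[ℂ] V) * (ρ q : V →L[ℂ] V) * (ρ s⁻¹ : V →L[ℂ] V)))
          * (ρ r : V →L[ℂ] V) := by
      simp only [coe_rho_mul, mul_assoc]
    rw [h1, trace_clm_mul_comm, ← mul_assoc, ← coe_rho_mul]
  simp_rw [hpt]
  have hiF : Integrable (fun s => (ρ s : V →L[ℂ] V) * (ρ q : V →L[ℂ] V) * (ρ s⁻¹ : V →L[ℂ] V)) μ :=
    cont_integrable μ _ ((hcont.mul continuous_const).mul (hcont.comp continuous_inv))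
  have h := ContinuousLinearMap.integral_comp_comm
    ((traceCLM V).comp (ContinuousLinearMap.mul ℂ (V →L[ℂ] V) (ρ (r*p) : V →L[ℂ] V))) hiF
  simp only [ContinuousLinearMap.comp_apply, ContinuousLinearMap.mul_apply'] at h
  rw [h, conj_integral μ ρ hcont hirr (ρ q : V →L[ℂ] V)]
  rw [mul_smul_comm, traceCLM_apply]
  have hone : ((ρ (r*p) : V →L[ℂ] V) * 1) = (ρ (r*p) : V →L[ℂ] V) := mul_one _
  rw [hone]
  simp only [ContinuousLinearMap.coe_smul, _root_.map_smul, smul_eq_mul]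
  unfold charOf
  ring


include hcont in
lemma char_bound : ∃ C : ℝ, ∀ t : G, ‖charOf ρ t‖ ≤ C := by
  obtain ⟨C, hC⟩ := isCompact_univ.exists_bound_of_continuousOn
    ((continuous_charOf ρ hcont).continuousOn (s := Set.univ))
  exact ⟨C, fun t => hC t (Set.mem_univ t)⟩

lemma measurable_char_word (n : ℕ) (w : Fin n → G → G) (hw : ∀ i, Continuous (w i)) (a b : G)
    (hcont' : Continuous fun g : G => ((ρ g : V →L[ℂ] V) : V →L[ℂ] V)) :
    Measurable fun y : Fin n → G =>
      charOf ρ (a * (List.ofFn fun i => w i (y i)).prod * b) := by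
  set ρ' : G →* (V →L[ℂ] V) := (unitary (V →L[ℂ] V)).subtype.comp ρ with hρ'
  have hρ'apply : ∀ t : G, ρ' t = ((ρ t : V →L[ℂ] V)) := fun t => rfl
  have key : ∀ y : Fin n → G, charOf ρ (a * (List.ofFn fun i => w i (y i)).prod * b)
      = traceCLM V (ρ' a * (List.ofFn fun i => ρ' (w i (y i))).prod * ρ' b) := by
    intro y
    have h0 : charOf ρ (a * (List.ofFn fun i => w i (y i)).prod * b)
        = traceCLM V (ρ' (a * (List.ofFn fun i => w i (y i)).prod * b)) := rfl
    rw [h0]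
    congr 1
    rw [map_mul, map_mul, map_list_prod, List.map_ofFn]
    rfl
  simp_rw [key]
  have hcontρ' : Continuous ρ' := hcont'
  refine ((traceCLM V).measurable).comp (Measurable.mul (Measurable.mul measurable_const ?_)
    measurable_const)
  have : (fun y : Fin n → G => (List.ofFn fun i => ρ' (w i (y i))).prod)
      = fun y => ((List.ofFn fun i => fun y' : Fin n → G => ρ' (w i (y' i))).map
          fun f => f y).prod := by
    funext y
    rw [List.map_ofFn]
    rfl
  rw [this]
  refine List.measurable_fun_prod _ (fun f hf => ?_)
  obtain ⟨i, rfl⟩ := List.mem_ofFn.mp hf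
  exact (hcontρ'.comp (hw i)).measurable.comp (measurable_pi_apply i)

include hcont hirr in
lemma matrix_orth [Nontrivial V] (v w z u' : V) :
    ∫ s, ⟪v, (ρ s⁻¹ : V →L[ℂ] V) z⟫ * ⟪u', (ρ s : V →L[ℂ] V) w⟫ ∂μ
      = ⟪v, w⟫ * ⟪u', z⟫ / (Module.finrank ℂ V : ℂ) := by
  set B : V →L[ℂ] V := (innerSL ℂ v).smulRight w with hB
  have htrB : LinearMap.trace ℂ V (B : V →ₗ[ℂ] V) = ⟪v, w⟫ := by
    rw [trace_eq_sum_inner (stdOrthonormalBasis ℂ V)]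
    simp only [hB, ContinuousLinearMap.smulRight_apply, innerSL_apply_apply, inner_smul_right]
    exact (stdOrthonormalBasis ℂ V).sum_inner_mul_inner v w
  set L : (V →L[ℂ] V) →L[ℂ] ℂ := (innerSL ℂ u').comp (ContinuousLinearMap.apply ℂ V z) with hL
  have hpt : ∀ s : G, ⟪v, (ρ s⁻¹ : V →L[ℂ] V) z⟫ * ⟪u', (ρ s : V →L[ℂ] V) w⟫
      = L ((ρ s : V →L[ℂ] V) * B * (ρ s⁻¹ : V →L[ℂ] V)) := by
    intro s
    simp only [hL, ContinuousLinearMap.comp_apply, ContinuousLinearMap.apply_apply,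
      innerSL_apply_apply, ContinuousLinearMap.mul_apply, hB, ContinuousLinearMap.smulRight_apply,
      _root_.map_smul, inner_smul_right, smul_eq_mul]
    try ring
  simp_rw [hpt]
  have hiF : Integrable (fun s => (ρ s : V →L[ℂ] V) * B * (ρ s⁻¹ : V →L[ℂ] V)) μ :=
    cont_integrable μ _ ((hcont.mul continuous_const).mul (hcont.comp continuous_inv))
  rw [ContinuousLinearMap.integral_comp_comm L hiF, conj_integral μ ρ hcont hirr B, htrB]
  simp only [hL, _root_.map_smul, ContinuousLinearMap.comp_apply,
    ContinuousLinearMap.apply_apply, ContinuousLinearMap.one_apply, innerSL_apply_apply, smul_eq_mul]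
  ring

include hcont hirr in
lemma char_conv [Nontrivial V] (c : G) :
    ∫ s, charOf ρ s⁻¹ * charOf ρ (c * s) ∂μ
      = charOf ρ c / (Module.finrank ℂ V : ℂ) := by
  set b := stdOrthonormalBasis ℂ V with hb
  set A : V →L[ℂ] V := ContinuousLinearMap.adjoint (ρ c : V →L[ℂ] V) with hA
  have hpt : ∀ s : G, charOf ρ s⁻¹ * charOf ρ (c * s)
      = ∑ i, ∑ k, ⟪b i, (ρ s⁻¹ : V →L[ℂ] V) (b i)⟫ * ⟪A (b k), (ρ s : V →L[ℂ] V) (b k)⟫ := by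
    intro s
    have h1 : charOf ρ s⁻¹ = ∑ i, ⟪b i, (ρ s⁻¹ : V →L[ℂ] V) (b i)⟫ :=
      trace_eq_sum_inner b _
    have h2 : charOf ρ (c * s) = ∑ k, ⟪A (b k), (ρ s : V →L[ℂ] V) (b k)⟫ := by
      unfold charOf
      rw [trace_eq_sum_inner b]
      congr 1; funext k
      rw [hA, ContinuousLinearMap.adjoint_inner_left, coe_rho_mul,
        ContinuousLinearMap.mul_apply]
    rw [h1, h2, Finset.sum_mul_sum]
  simp_rw [hpt]
  have hint : ∀ (i k : Fin (Module.finrank ℂ V)), Integrable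
      (fun s => ⟪b i, (ρ s⁻¹ : V →L[ℂ] V) (b i)⟫ * ⟪A (b k), (ρ s : V →L[ℂ] V) (b k)⟫) μ := by
    intro i k
    refine cont_integrable μ _ (Continuous.mul ?_ ?_)
    · exact Continuous.inner continuous_const
        (((ContinuousLinearMap.apply ℂ V (b i)).continuous).comp (hcont.comp continuous_inv))
    · exact Continuous.inner continuous_const
        (((ContinuousLinearMap.apply ℂ V (b k)).continuous).comp hcont)
  rw [integral_finset_sum _ (fun i _ => integrable_finset_sum _ (fun k _ => hint i k))]
  have : ∀ i ∈ Finset.univ, ∫ s, ∑ k, ⟪b i, (ρ s⁻¹ : V →L[ℂ] V) (b i)⟫ *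
      ⟪A (b k), (ρ s : V →L[ℂ] V) (b k)⟫ ∂μ
      = ∑ k, ⟪b i, b k⟫ * ⟪A (b k), b i⟫ / (Module.finrank ℂ V : ℂ) := by
    intro i _
    rw [integral_finset_sum _ (fun k _ => hint i k)]
    congr 1; funext k
    exact matrix_orth μ ρ hcont hirr (b i) (b k) (b i) (A (b k))
  rw [Finset.sum_congr rfl this, Finset.sum_comm]
  have hrow : ∀ k, ∑ i, ⟪b i, b k⟫ * ⟪A (b k), b i⟫ / (Module.finrank ℂ V : ℂ)
      = ⟪A (b k), b k⟫ / (Module.finrank ℂ V : ℂ) := by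
    intro k
    rw [← Finset.sum_div]
    congr 1
    have : ∀ i, ⟪b i, b k⟫ * ⟪A (b k), b i⟫ = ⟪A (b k), b i⟫ * ⟪b i, b k⟫ := fun i => mul_comm _ _
    simp_rw [this]
    exact b.sum_inner_mul_inner (A (b k)) (b k)
  rw [Finset.sum_congr rfl (fun k _ => hrow k), ← Finset.sum_div]
  congr 1
  have : ∀ k, ⟪A (b k), b k⟫ = ⟪b k, (ρ c : V →L[ℂ] V) (b k)⟫ := by
    intro k
    rw [hA, ContinuousLinearMap.adjoint_inner_left]
  rw [Finset.sum_congr rfl (fun k _ => this k)]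
  exact (trace_eq_sum_inner b _).symm

include hirr in
lemma central_char [Nontrivial V] (u : G) (hu : u ∈ Subgroup.center G) (h : G) :
    charOf ρ (h * u⁻¹)
      = charOf ρ u⁻¹ * charOf ρ h / (Module.finrank ℂ V : ℂ) := by
  have huinv : u⁻¹ ∈ Subgroup.center G := (Subgroup.center G).inv_mem hu
  have hAcomm : ∀ s : G, (ρ s : V →L[ℂ] V) * (ρ u⁻¹ : V →L[ℂ] V)
      = (ρ u⁻¹ : V →L[ℂ] V) * (ρ s : V →L[ℂ] V) := by
    intro s
    rw [← coe_rho_mul, ← coe_rho_mul]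
    congr 2
    exact Subgroup.mem_center_iff.mp huinv s
  have hsc := schur_scalar ρ hirr (ρ u⁻¹ : V →L[ℂ] V) hAcomm
  unfold charOf
  rw [coe_rho_mul]
  conv_lhs => rw [hsc, mul_smul_comm, mul_one]
  simp only [ContinuousLinearMap.coe_smul, _root_.map_smul, smul_eq_mul]
  ring

end rep

lemma integral_pi_split (n : ℕ) (f : (Fin (n+1) → G) → ℂ) (hmeas : Measurable f)
    (C : ℝ) (hb : ∀ y, ‖f y‖ ≤ C) :
    ∫ y, f y ∂(Measure.pi fun _ => μ)
      = ∫ t, ∫ z : Fin n → G, f (Fin.cons t z) ∂(Measure.pi fun _ => μ) ∂μ := by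
  have h := measurePreserving_piFinSuccAbove (fun _ : Fin (n+1) => μ) 0
  set e := MeasurableEquiv.piFinSuccAbove (fun _ : Fin (n+1) => G) 0 with he
  have hsymm : ∀ p : G × (Fin n → G), e.symm p = Fin.cons p.1 p.2 := by
    intro p
    show (Fin.insertNthEquiv (fun _ : Fin (n+1) => G) 0) p = Fin.cons p.1 p.2
    rw [Fin.insertNthEquiv_zero]
    rfl
  have h1 : ∫ y, f y ∂(Measure.pi fun _ => μ)
      = ∫ p, f (e.symm p) ∂(μ.prod (Measure.pi fun _ => μ)) := by
    rw [← h.integral_comp e.measurableEmbedding (fun p => f (e.symm p))]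
    simp
  have hint : Integrable (fun p => f (e.symm p)) (μ.prod (Measure.pi fun _ => μ)) := by
    refine Integrable.mono' (integrable_const C)
      ((hmeas.comp e.symm.measurable).aestronglyMeasurable) ?_
    exact Filter.Eventually.of_forall fun p => hb _
  rw [h1, integral_prod _ hint]
  simp_rw [hsymm]


section rep2
variable (ρ : G →* unitary (V →L[ℂ] V))
    (hcont : Continuous fun g : G => ((ρ g : V →L[ℂ] V) : V →L[ℂ] V))
    (hirr : ∀ W : Submodule ℂ V,
      (∀ g : G, W.map ((ρ g : V →L[ℂ] V) : V →ₗ[ℂ] V) ≤ W) → W = ⊥ ∨ W = ⊤)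

include hcont hirr in
lemma word_integral_y [Nontrivial V] :
    ∀ (n : ℕ) (a b : G) (x : Fin n → G),
    ∫ y : Fin n → G,
        charOf ρ (a * (List.ofFn fun i => x i * y i * (x i)⁻¹ * (y i)⁻¹).prod * b)
        ∂(Measure.pi fun _ => μ)
      = (∏ i, charOf ρ ((x i)⁻¹)) * charOf ρ (b * a * (List.ofFn x).prod)
          / (Module.finrank ℂ V : ℂ) ^ n := by
  have hd : (Module.finrank ℂ V : ℂ) ≠ 0 := Nat.cast_ne_zero.mpr Module.finrank_pos.ne'
  intro n
  induction n with
  | zero =>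
    intro a b x
    simp only [List.ofFn_zero, List.prod_nil, mul_one, Finset.univ_eq_empty,
      Finset.prod_empty, pow_zero, one_mul, div_one]
    rw [integral_const]
    simp [charOf_mul_comm ρ a b]
  | succ n ih =>
    intro a b x
    obtain ⟨C, hC⟩ := char_bound ρ hcont
    rw [integral_pi_split μ n _ (measurable_char_word ρ (n+1)
        (fun i t => x i * t * (x i)⁻¹ * t⁻¹)
        (fun i => (((continuous_mul_left (x i)).mul continuous_const).mul
          continuous_inv : Continuous fun t : G => (x i * t) * (x i)⁻¹ * t⁻¹)) a b hcont) C
        (fun y => hC _)]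
    set r := (List.ofFn fun j : Fin n => x j.succ).prod with hr
    have hsplit : ∀ (t : G) (z : Fin n → G),
        (a * (List.ofFn fun i : Fin (n+1) => x i * (Fin.cons t z : Fin (n+1) → G) i * (x i)⁻¹ *
            ((Fin.cons t z : Fin (n+1) → G) i)⁻¹).prod * b)
        = ((a * (x 0 * t * (x 0)⁻¹ * t⁻¹)) *
            (List.ofFn fun j : Fin n => x j.succ * z j * (x j.succ)⁻¹ * (z j)⁻¹).prod * b) := by
      intro t z
      rw [List.ofFn_succ]
      simp only [Fin.cons_zero, Fin.cons_succ, List.prod_cons]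
      simp [mul_assoc]
    have hinner : ∀ t : G,
        (∫ z : Fin n → G, charOf ρ (a * (List.ofFn fun i : Fin (n+1) =>
            x i * (Fin.cons t z : Fin (n+1) → G) i * (x i)⁻¹ *
            ((Fin.cons t z : Fin (n+1) → G) i)⁻¹).prod * b)
          ∂(Measure.pi fun _ => μ))
        = ((∏ j : Fin n, charOf ρ ((x j.succ)⁻¹)) / (Module.finrank ℂ V : ℂ) ^ n) •
            charOf ρ ((b * a * x 0) * t * (x 0)⁻¹ * t⁻¹ * r) := by
      intro t
      simp_rw [hsplit t]
      rw [ih (a * (x 0 * t * (x 0)⁻¹ * t⁻¹)) b (fun j => x j.succ)]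
      rw [smul_eq_mul]
      have hargeq : b * (a * (x 0 * t * (x 0)⁻¹ * t⁻¹)) * r
          = (b * a * x 0) * t * (x 0)⁻¹ * t⁻¹ * r := by
        simp [mul_assoc]
      rw [hargeq]
      ring
    simp_rw [hinner]
    rw [integral_smul, int_conj_char μ ρ hcont hirr, smul_eq_mul, Fin.prod_univ_succ]
    have hofn : (List.ofFn x).prod = x 0 * r := by
      rw [List.ofFn_succ, List.prod_cons]
    rw [hofn]
    have hcomm2 : charOf ρ (r * (b * a * x 0)) = charOf ρ (b * a * (x 0 * r)) := by
      rw [charOf_mul_comm]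
      congr 1
      simp [mul_assoc]
    rw [hcomm2]
    rw [pow_succ]
    field_simp

include hcont hirr in
lemma word_integral_x [Nontrivial V] :
    ∀ (n : ℕ) (c : G),
    ∫ x : Fin n → G, (∏ i, charOf ρ ((x i)⁻¹)) * charOf ρ (c * (List.ofFn x).prod)
        ∂(Measure.pi fun _ => μ)
      = charOf ρ c / (Module.finrank ℂ V : ℂ) ^ n := by
  have hd : (Module.finrank ℂ V : ℂ) ≠ 0 := Nat.cast_ne_zero.mpr Module.finrank_pos.ne'
  intro n
  induction n with
  | zero =>
    intro c
    simp only [Finset.univ_eq_empty, Finset.prod_empty, List.ofFn_zero, List.prod_nil,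
      mul_one, pow_zero, one_mul, div_one]
    rw [integral_const]
    simp
  | succ n ih =>
    intro c
    obtain ⟨C, hC⟩ := char_bound ρ hcont
    set C' := max C 1 with hC'
    have hC'1 : (1:ℝ) ≤ C' := le_max_right _ _
    have hC'0 : (0:ℝ) ≤ C' := zero_le_one.trans hC'1
    have hC'g : ∀ t, ‖charOf ρ t‖ ≤ C' := fun t => (hC t).trans (le_max_left _ _)
    have hmeas : Measurable fun x : Fin (n+1) → G =>
        (∏ i, charOf ρ ((x i)⁻¹)) * charOf ρ (c * (List.ofFn x).prod) := by
      refine Measurable.mul ?_ ?_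
      · exact Finset.measurable_prod _ (fun i _ =>
          (((continuous_charOf ρ hcont).comp continuous_inv).measurable).comp
            (measurable_pi_apply i))
      · have hmw := measurable_char_word ρ (n+1) (fun _ t => t)
          (fun _ => continuous_id) c 1 hcont
        simp only [mul_one] at hmw
        convert hmw using 2
      
    have hbnd : ∀ x : Fin (n+1) → G,
        ‖(∏ i, charOf ρ ((x i)⁻¹)) * charOf ρ (c * (List.ofFn x).prod)‖
          ≤ C' ^ (n+1) * C' := by
      intro x
      rw [norm_mul]
      refine mul_le_mul ?_ (hC'g _) (norm_nonneg _) (pow_nonneg hC'0 _)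
      rw [norm_prod]
      calc ∏ i, ‖charOf ρ ((x i)⁻¹)‖ ≤ ∏ _i : Fin (n+1), C' :=
            Finset.prod_le_prod (fun i _ => norm_nonneg _) (fun i _ => hC'g _)
        _ = C' ^ (n+1) := by rw [Finset.prod_const, Finset.card_univ, Fintype.card_fin]
    rw [integral_pi_split μ n _ hmeas (C' ^ (n+1) * C') hbnd]
    have hsplit : ∀ (t : G) (z : Fin n → G),
        (∏ i, charOf ρ (((Fin.cons t z : Fin (n+1) → G) i)⁻¹)) *
          charOf ρ (c * (List.ofFn (Fin.cons t z : Fin (n+1) → G)).prod)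
        = charOf ρ t⁻¹ • ((∏ j : Fin n, charOf ρ ((z j)⁻¹)) *
            charOf ρ ((c * t) * (List.ofFn z).prod)) := by
      intro t z
      rw [Fin.prod_univ_succ, List.ofFn_succ, List.prod_cons]
      simp only [Fin.cons_zero, Fin.cons_succ, smul_eq_mul]
      have : c * (t * (List.ofFn z).prod) = (c * t) * (List.ofFn z).prod := by
        rw [mul_assoc]
      rw [this]
      ring
    simp_rw [hsplit]
    have hin : ∀ t : G, ∫ z : Fin n → G, charOf ρ t⁻¹ • ((∏ j : Fin n, charOf ρ ((z j)⁻¹)) *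
        charOf ρ ((c * t) * (List.ofFn z).prod)) ∂(Measure.pi fun _ => μ)
        = ((Module.finrank ℂ V : ℂ) ^ n)⁻¹ • (charOf ρ t⁻¹ * charOf ρ ((c * t))) := by
      intro t
      rw [integral_smul, ih (c * t), smul_eq_mul, smul_eq_mul]
      field_simp
    simp_rw [hin]
    rw [integral_smul, char_conv μ ρ hcont hirr c, smul_eq_mul, pow_succ]
    field_simp
end rep2
end WilsonAux





open WilsonAux in
/-- Wilson line expectation for a contractible loop on a genus-`g` surface, for a bundle of
topological type `u`:
`∫_{G^{2g+1}} χ_σ(x̄) χ_μ(x̄) χ_ν(x̄⁻¹ (∏ᵢ xᵢ yᵢ xᵢ⁻¹ yᵢ⁻¹) u⁻¹) dx̄ dx dy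
  = D χ_ν(u⁻¹) / d_ν^{2g+1}`, where `D = ∫_G χ_σ(x) χ_μ(x) χ_ν(x⁻¹) dx`. -/
theorem wilson_line_contractible_integral
    {G : Type*} [Group G] [TopologicalSpace G] [IsTopologicalGroup G]
    [CompactSpace G] [T2Space G] [MeasurableSpace G] [BorelSpace G]
    (μ : Measure G) [μ.IsHaarMeasure] [IsProbabilityMeasure μ]
    {Vσ : Type*} [NormedAddCommGroup Vσ] [InnerProductSpace ℂ Vσ]
    [FiniteDimensional ℂ Vσ]
    {Vμ : Type*} [NormedAddCommGroup Vμ] [InnerProductSpace ℂ Vμ]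
    [FiniteDimensional ℂ Vμ]
    {Vν : Type*} [NormedAddCommGroup Vν] [InnerProductSpace ℂ Vν]
    [FiniteDimensional ℂ Vν]
    (ρσ : G →* unitary (Vσ →L[ℂ] Vσ))
    (ρμ : G →* unitary (Vμ →L[ℂ] Vμ))
    (ρν : G →* unitary (Vν →L[ℂ] Vν))
    (hcontσ : Continuous fun g : G => ((ρσ g : Vσ →L[ℂ] Vσ) : Vσ →L[ℂ] Vσ))
    (hcontμ : Continuous fun g : G => ((ρμ g : Vμ →L[ℂ] Vμ) : Vμ →L[ℂ] Vμ))
    (hcontν : Continuous fun g : G => ((ρν g : Vν →L[ℂ] Vν) : Vν →L[ℂ] Vν))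
    (hirrσ : ∀ W : Submodule ℂ Vσ,
      (∀ g : G, W.map ((ρσ g : Vσ →L[ℂ] Vσ) : Vσ →ₗ[ℂ] Vσ) ≤ W) → W = ⊥ ∨ W = ⊤)
    (hirrμ : ∀ W : Submodule ℂ Vμ,
      (∀ g : G, W.map ((ρμ g : Vμ →L[ℂ] Vμ) : Vμ →ₗ[ℂ] Vμ) ≤ W) → W = ⊥ ∨ W = ⊤)
    (hirrν : ∀ W : Submodule ℂ Vν,
      (∀ g : G, W.map ((ρν g : Vν →L[ℂ] Vν) : Vν →ₗ[ℂ] Vν) ≤ W) → W = ⊥ ∨ W = ⊤)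
    (χσ χμ χν : G → ℂ)
    (hχσ : ∀ g, χσ g = LinearMap.trace ℂ Vσ ((ρσ g : Vσ →L[ℂ] Vσ) : Vσ →ₗ[ℂ] Vσ))
    (hχμ : ∀ g, χμ g = LinearMap.trace ℂ Vμ ((ρμ g : Vμ →L[ℂ] Vμ) : Vμ →ₗ[ℂ] Vμ))
    (hχν : ∀ g, χν g = LinearMap.trace ℂ Vν ((ρν g : Vν →L[ℂ] Vν) : Vν →ₗ[ℂ] Vν))
    (u : G) (hu : u ∈ Subgroup.center G)
    (g : ℕ) (hg : 1 ≤ g)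
    (D : ℂ) (hD : D = ∫ x, χσ x * χμ x * χν x⁻¹ ∂μ) :
    ∫ xbar : G, ∫ x : Fin g → G, ∫ y : Fin g → G,
        χσ xbar * χμ xbar *
          χν (xbar⁻¹ * (List.ofFn fun i : Fin g => x i * y i * (x i)⁻¹ * (y i)⁻¹).prod * u⁻¹)
        ∂(Measure.pi fun _ => μ) ∂(Measure.pi fun _ => μ) ∂μ =
      D * χν u⁻¹ / (Module.finrank ℂ Vν : ℂ) ^ (2 * g + 1) := by
  rcases subsingleton_or_nontrivial Vν with hsub | hnt
  · have hz : ∀ t : G, χν t = 0 := by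
      intro t
      rw [hχν t, Subsingleton.elim (((ρν t : Vν →L[ℂ] Vν) : Vν →ₗ[ℂ] Vν)) 0, map_zero]
    simp_rw [hz, mul_zero, integral_zero, zero_div]
  · have hχν' : χν = WilsonAux.charOf ρν := funext fun t => hχν t
    subst hχν'
    have hd : (Module.finrank ℂ Vν : ℂ) ≠ 0 := Nat.cast_ne_zero.mpr Module.finrank_pos.ne'
    have hy : ∀ (xbar : G) (x : Fin g → G),
        (∫ y : Fin g → G, χσ xbar * χμ xbar *
          charOf ρν (xbar⁻¹ * (List.ofFn fun i : Fin g => x i * y i * (x i)⁻¹ * (y i)⁻¹).prod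
            * u⁻¹) ∂(Measure.pi fun _ => μ))
        = (χσ xbar * χμ xbar / (Module.finrank ℂ Vν : ℂ) ^ g) •
            ((∏ i : Fin g, charOf ρν ((x i)⁻¹)) *
              charOf ρν (u⁻¹ * xbar⁻¹ * (List.ofFn x).prod)) := by
      intro xbar x
      have heq : (fun y : Fin g → G => χσ xbar * χμ xbar *
          charOf ρν (xbar⁻¹ * (List.ofFn fun i : Fin g => x i * y i * (x i)⁻¹ * (y i)⁻¹).prod
            * u⁻¹))
          = fun y : Fin g → G => (χσ xbar * χμ xbar) •
            charOf ρν (xbar⁻¹ * (List.ofFn fun i : Fin g => x i * y i * (x i)⁻¹ * (y i)⁻¹).prod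
              * u⁻¹) := by
        funext y; rw [smul_eq_mul]
      rw [heq, integral_smul, word_integral_y μ ρν hcontν hirrν g xbar⁻¹ u⁻¹ x,
        smul_eq_mul, smul_eq_mul]
      ring
    have hx : ∀ xbar : G,
        (∫ x : Fin g → G, ∫ y : Fin g → G, χσ xbar * χμ xbar *
          charOf ρν (xbar⁻¹ * (List.ofFn fun i : Fin g => x i * y i * (x i)⁻¹ * (y i)⁻¹).prod
            * u⁻¹) ∂(Measure.pi fun _ => μ) ∂(Measure.pi fun _ => μ))
        = (charOf ρν u⁻¹ / (Module.finrank ℂ Vν : ℂ) ^ (2 * g + 1)) •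
            (χσ xbar * χμ xbar * charOf ρν xbar⁻¹) := by
      intro xbar
      simp_rw [hy xbar]
      rw [integral_smul, word_integral_x μ ρν hcontν hirrν g (u⁻¹ * xbar⁻¹)]
      rw [charOf_mul_comm ρν u⁻¹ xbar⁻¹, central_char ρν hirrν u hu xbar⁻¹]
      rw [smul_eq_mul, smul_eq_mul]
      rw [show 2 * g + 1 = g + g + 1 by ring, pow_add, pow_add, pow_one]
      field_simp
    simp_rw [hx]
    rw [integral_smul, hD, smul_eq_mul]
    ring
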